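/- Linear convergence of the tensor splitting algorithm: if ς = (2k−3)α(1−α)^{−(k−2)/(k−1)} < 1 and y₀ ∈ Δ, then the iterates y_{c+1} = Φ(y_c) satisfy ‖y_c − y_*‖_1 ≤ ς^c ‖y₀ − y_*‖_1, where y_* ∈ Δ is the unique MLPPR solution; in particular y_c → y_*. -/

import Mathlib

open Finset Real

noncomputable def contr {n m : ℕ} (P : Fin n → (Fin m → Fin n) → ℝ) (y : Fin n → ℝ) : Fin n → ℝ :=
  fun i => ∑ j : Fin m → Fin n, P i j * ∏ s, y (j s)

noncomputable def Phi {n : ℕ} (k : ℕ) (P : Fin n → (Fin (k-1) → Fin n) → ℝ) (v : Fin n → ℝ)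
    (α : ℝ) (y : Fin n → ℝ) : Fin n → ℝ :=
  fun i => (1 + α * ∑ l, contr P y l) ^ (-((k:ℝ)-2)/((k:ℝ)-1)) * (v i + α * contr P y i)


lemma bern_aux {θ : ℝ} (hθ0 : 0 ≤ θ) (hθ1 : θ ≤ 1) {a b : ℝ} (ha : 1 ≤ a) (hab : a ≤ b) :
    a * (a ^ (-θ) - b ^ (-θ)) ≤ θ * (b - a) := by
  have ha0 : (0:ℝ) < a := lt_of_lt_of_le one_pos ha
  have hb0 : (0:ℝ) < b := lt_of_lt_of_le ha0 hab
  have hb1 : (1:ℝ) ≤ b := le_trans ha hab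
  have hbern : (b / a) ^ θ ≤ 1 + θ * (b / a - 1) := by
    have := rpow_one_add_le_one_add_mul_self (s := b / a - 1) (by
      have : (0:ℝ) < b / a := div_pos hb0 ha0
      linarith) hθ0 hθ1
    simpa using this
  have haθ : (0:ℝ) < a ^ θ := Real.rpow_pos_of_pos ha0 _
  have hbθ : (0:ℝ) < b ^ θ := Real.rpow_pos_of_pos hb0 _
  have hbθ1 : (1:ℝ) ≤ b ^ θ := Real.one_le_rpow hb1 hθ0
  have hkey : b ^ θ ≤ a ^ θ * (1 + θ * (b / a - 1)) := by
    rw [Real.div_rpow hb0.le ha0.le] at hbern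
    calc b ^ θ = (b ^ θ / a ^ θ) * a ^ θ := by field_simp
    _ ≤ (1 + θ * (b / a - 1)) * a ^ θ := mul_le_mul_of_nonneg_right hbern haθ.le
    _ = a ^ θ * (1 + θ * (b / a - 1)) := by ring
  rw [Real.rpow_neg ha0.le θ, Real.rpow_neg hb0.le θ]
  have h1 : a * ((a ^ θ)⁻¹ - (b ^ θ)⁻¹) = a * (b ^ θ - a ^ θ) / (a ^ θ * b ^ θ) := by
    field_simp
  rw [h1, div_le_iff₀ (by positivity)]
  have hba : a * (b / a) = b := by field_simp
  have hθba : 0 ≤ θ * (b - a) := mul_nonneg hθ0 (by linarith)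
  have h2 : b ^ θ - a ^ θ ≤ a ^ θ * θ * (b / a - 1) := by nlinarith [hkey]
  have h3 : a * (b ^ θ - a ^ θ) ≤ a ^ θ * θ * (b - a) := by
    calc a * (b ^ θ - a ^ θ) ≤ a * (a ^ θ * θ * (b / a - 1)) :=
          mul_le_mul_of_nonneg_left h2 ha0.le
    _ = a ^ θ * θ * (a * (b / a) - a) := by ring
    _ = a ^ θ * θ * (b - a) := by rw [hba]
  have h4 := mul_le_mul_of_nonneg_left hbθ1 (mul_nonneg hθba haθ.le)
  nlinarith [h3, h4]


lemma prod_diff_bound {n : ℕ} (x y : Fin n → ℝ) (hx : ∀ i, 0 ≤ x i) (hy : ∀ i, 0 ≤ y i)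
    (M : ℝ) (hM : 1 ≤ M) (hxM : ∑ i, x i ≤ M) (hyM : ∑ i, y i ≤ M) :
    ∀ m : ℕ, ∑ j : Fin m → Fin n, |∏ s, x (j s) - ∏ s, y (j s)| ≤
      (m : ℝ) * M ^ (m - 1) * ∑ i, |x i - y i| := by
  have hM0 : (0:ℝ) ≤ M := le_trans zero_le_one hM
  have hd0 : (0:ℝ) ≤ ∑ i, |x i - y i| := Finset.sum_nonneg fun i _ => abs_nonneg _
  have hX0 : (0:ℝ) ≤ ∑ i, x i := Finset.sum_nonneg fun i _ => hx i
  have hY0 : (0:ℝ) ≤ ∑ i, y i := Finset.sum_nonneg fun i _ => hy i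
  intro m
  induction m with
  | zero => simp
  | succ m ih =>
    have hequiv : ∑ j : Fin (m+1) → Fin n, |∏ s, x (j s) - ∏ s, y (j s)| =
        ∑ p : Fin n × (Fin m → Fin n),
          |x p.1 * ∏ s, x (p.2 s) - y p.1 * ∏ s, y (p.2 s)| := by
      apply Fintype.sum_equiv (Fin.consEquiv fun _ => Fin n).symm
      intro j
      simp [Fin.prod_univ_succ, Fin.consEquiv, Fin.tail]
    rw [hequiv, Fintype.sum_prod_type]
    have step1 : ∀ (i : Fin n) (j' : Fin m → Fin n),
        |x i * ∏ s, x (j' s) - y i * ∏ s, y (j' s)| ≤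
          |x i - y i| * ∏ s, x (j' s) + y i * |∏ s, x (j' s) - ∏ s, y (j' s)| := by
      intro i j'
      have hpx : (0:ℝ) ≤ ∏ s, x (j' s) := Finset.prod_nonneg fun s _ => hx _
      calc |x i * ∏ s, x (j' s) - y i * ∏ s, y (j' s)|
          = |(x i - y i) * ∏ s, x (j' s) + y i * (∏ s, x (j' s) - ∏ s, y (j' s))| := by
            ring_nf
      _ ≤ |(x i - y i) * ∏ s, x (j' s)| + |y i * (∏ s, x (j' s) - ∏ s, y (j' s))| :=
            abs_add_le _ _
      _ = |x i - y i| * ∏ s, x (j' s) + y i * |∏ s, x (j' s) - ∏ s, y (j' s)| := by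
            rw [abs_mul, abs_mul, abs_of_nonneg hpx, abs_of_nonneg (hy i)]
    calc ∑ i, ∑ j' : Fin m → Fin n, |x i * ∏ s, x (j' s) - y i * ∏ s, y (j' s)|
        ≤ ∑ i, ∑ j' : Fin m → Fin n,
            (|x i - y i| * ∏ s, x (j' s) + y i * |∏ s, x (j' s) - ∏ s, y (j' s)|) := by
          apply Finset.sum_le_sum; intro i _; apply Finset.sum_le_sum; intro j' _
          exact step1 i j'
    _ = (∑ i, |x i - y i|) * (∑ j' : Fin m → Fin n, ∏ s, x (j' s)) +
          (∑ i, y i) * (∑ j' : Fin m → Fin n, |∏ s, x (j' s) - ∏ s, y (j' s)|) := by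
        simp only [Finset.sum_add_distrib, ← Finset.mul_sum, ← Finset.sum_mul]
    _ ≤ (∑ i, |x i - y i|) * M ^ m + M * ((m : ℝ) * M ^ (m - 1) * ∑ i, |x i - y i|) := by
        apply add_le_add
        · apply mul_le_mul_of_nonneg_left _ hd0
          have hexp : ∑ j' : Fin m → Fin n, ∏ s, x (j' s) = (∑ i, x i) ^ m :=
            (Fintype.sum_pow x m).symm
          rw [hexp]
          exact pow_le_pow_left₀ hX0 hxM m
        · exact mul_le_mul hyM ih (Finset.sum_nonneg fun _ _ => abs_nonneg _) hM0
    _ ≤ ((m:ℝ)+1) * M ^ m * ∑ i, |x i - y i| := by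
        have hMM : M * ((m : ℝ) * M ^ (m - 1)) ≤ (m : ℝ) * M ^ m := by
          cases m with
          | zero => simp
          | succ t =>
            rw [Nat.succ_sub_one, pow_succ]
            exact le_of_eq (by push_cast; ring)
        nlinarith [hd0, hMM]
    _ = ((m+1 : ℕ) : ℝ) * M ^ ((m+1) - 1) * ∑ i, |x i - y i| := by
        push_cast [Nat.succ_sub_one]; ring

lemma contr_nonneg {n m : ℕ} (P : Fin n → (Fin m → Fin n) → ℝ) (hP0 : ∀ i j, 0 ≤ P i j)
    (z : Fin n → ℝ) (hz : ∀ i, 0 ≤ z i) (i : Fin n) : 0 ≤ contr P z i :=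
  Finset.sum_nonneg fun j _ => mul_nonneg (hP0 i j) (Finset.prod_nonneg fun s _ => hz _)

lemma contr_sum_le {n m : ℕ} (P : Fin n → (Fin m → Fin n) → ℝ) (hP0 : ∀ i j, 0 ≤ P i j)
    (hPs : ∀ j, ∑ i, P i j ≤ 1) (z : Fin n → ℝ) (hz : ∀ i, 0 ≤ z i) :
    ∑ l, contr P z l ≤ (∑ i, z i) ^ m := by
  unfold contr
  rw [Finset.sum_comm, Fintype.sum_pow]
  apply Finset.sum_le_sum
  intro j _
  have hp : (0:ℝ) ≤ ∏ s, z (j s) := Finset.prod_nonneg fun s _ => hz _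
  rw [← Finset.sum_mul]
  nlinarith [hPs j]

lemma contr_lip {n m : ℕ} (P : Fin n → (Fin m → Fin n) → ℝ) (hP0 : ∀ i j, 0 ≤ P i j)
    (hPs : ∀ j, ∑ i, P i j ≤ 1) (x y : Fin n → ℝ) (hx : ∀ i, 0 ≤ x i) (hy : ∀ i, 0 ≤ y i)
    (M : ℝ) (hM : 1 ≤ M) (hxM : ∑ i, x i ≤ M) (hyM : ∑ i, y i ≤ M) :
    ∑ i, |contr P x i - contr P y i| ≤ (m : ℝ) * M ^ (m - 1) * ∑ i, |x i - y i| := by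
  have h1 : ∀ i, |contr P x i - contr P y i| ≤
      ∑ j : Fin m → Fin n, P i j * |∏ s, x (j s) - ∏ s, y (j s)| := by
    intro i
    unfold contr
    rw [← Finset.sum_sub_distrib]
    refine (Finset.abs_sum_le_sum_abs _ _).trans ?_
    apply Finset.sum_le_sum; intro j _
    rw [← mul_sub, abs_mul, abs_of_nonneg (hP0 i j)]
  calc ∑ i, |contr P x i - contr P y i|
      ≤ ∑ i, ∑ j : Fin m → Fin n, P i j * |∏ s, x (j s) - ∏ s, y (j s)| :=
        Finset.sum_le_sum fun i _ => h1 i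
  _ = ∑ j : Fin m → Fin n, (∑ i, P i j) * |∏ s, x (j s) - ∏ s, y (j s)| := by
      rw [Finset.sum_comm]; simp [Finset.sum_mul]
  _ ≤ ∑ j : Fin m → Fin n, |∏ s, x (j s) - ∏ s, y (j s)| := by
      apply Finset.sum_le_sum; intro j _
      have := abs_nonneg (∏ s, x (j s) - ∏ s, y (j s))
      nlinarith [hPs j, Finset.sum_nonneg (fun i (_ : i ∈ Finset.univ) => hP0 i j)]
  _ ≤ (m : ℝ) * M ^ (m - 1) * ∑ i, |x i - y i| :=
      prod_diff_bound x y hx hy M hM hxM hyM m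

section facts
variable {k : ℕ} {α : ℝ}

lemma hc_pos (hk : 2 ≤ k) : (0:ℝ) < (k:ℝ) - 1 := by
  have : (2:ℝ) ≤ (k:ℝ) := by exact_mod_cast hk
  linarith

lemma M_one_le (hk : 2 ≤ k) (hα0 : 0 ≤ α) (hα1 : α < 1) :
    1 ≤ (1 - α) ^ (-(1:ℝ)/((k:ℝ)-1)) := by
  apply Real.one_le_rpow_of_pos_of_le_one_of_nonpos (by linarith) (by linarith)
  have := hc_pos hk
  apply div_nonpos_of_nonpos_of_nonneg <;> linarith

lemma M_pow_k1 (hk : 2 ≤ k) (hα0 : 0 ≤ α) (hα1 : α < 1) :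
    ((1 - α) ^ (-(1:ℝ)/((k:ℝ)-1))) ^ (k-1) = (1 - α)⁻¹ := by
  have h1α : (0:ℝ) < 1 - α := by linarith
  have hc := hc_pos hk
  rw [← Real.rpow_natCast ((1 - α) ^ (-(1:ℝ)/((k:ℝ)-1))) (k-1), ← Real.rpow_mul h1α.le]
  have hcast : ((k - 1 : ℕ) : ℝ) = (k:ℝ) - 1 := by
    push_cast [Nat.cast_sub (by omega : 1 ≤ k)]; ring
  rw [hcast]
  rw [div_mul_cancel₀ _ (ne_of_gt hc)]
  exact Real.rpow_neg_one _

lemma M_pow_k2 (hk : 2 ≤ k) (hα0 : 0 ≤ α) (hα1 : α < 1) :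
    ((1 - α) ^ (-(1:ℝ)/((k:ℝ)-1))) ^ (k-2) = (1 - α) ^ (-((k:ℝ)-2)/((k:ℝ)-1)) := by
  have h1α : (0:ℝ) < 1 - α := by linarith
  have hc := hc_pos hk
  rw [← Real.rpow_natCast ((1 - α) ^ (-(1:ℝ)/((k:ℝ)-1))) (k-2), ← Real.rpow_mul h1α.le]
  congr 1
  have hcast : ((k - 2 : ℕ) : ℝ) = (k:ℝ) - 2 := by
    push_cast [Nat.cast_sub hk]; ring
  rw [hcast]
  field_simp

end facts

lemma phi_contract_core {n : ℕ} (k : ℕ) (hk : 2 ≤ k)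
    (P : Fin n → (Fin (k-1) → Fin n) → ℝ)
    (hP0 : ∀ i j, 0 ≤ P i j) (hPs : ∀ j, ∑ i, P i j ≤ 1)
    (v : Fin n → ℝ) (hv0 : ∀ i, 0 ≤ v i) (hv1 : ∑ i, v i = 1)
    (α : ℝ) (hα0 : 0 ≤ α) (hα1 : α < 1)
    (x y : Fin n → ℝ)
    (hx0 : ∀ i, 0 ≤ x i) (hxΔ : ∑ i, x i ≤ (1 - α) ^ (-(1:ℝ)/((k:ℝ)-1)))
    (hy0 : ∀ i, 0 ≤ y i) (hyΔ : ∑ i, y i ≤ (1 - α) ^ (-(1:ℝ)/((k:ℝ)-1)))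
    (hS : ∑ l, contr P x l ≤ ∑ l, contr P y l) :
    ∑ i, |Phi k P v α x i - Phi k P v α y i| ≤
      (2*(k:ℝ)-3) * α * (1 - α) ^ (-((k:ℝ)-2)/((k:ℝ)-1)) * ∑ i, |x i - y i| := by
  have hc := hc_pos hk
  have h1α : (0:ℝ) < 1 - α := by linarith
  set M : ℝ := (1 - α) ^ (-(1:ℝ)/((k:ℝ)-1)) with hMdef
  have hM1 : 1 ≤ M := M_one_le hk hα0 hα1
  have hMk1 : M ^ (k-1) = (1 - α)⁻¹ := M_pow_k1 hk hα0 hα1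
  have hMk2 : M ^ (k-2) = (1 - α) ^ (-((k:ℝ)-2)/((k:ℝ)-1)) := M_pow_k2 hk hα0 hα1
  set θ : ℝ := ((k:ℝ)-2)/((k:ℝ)-1) with hθdef
  have hθ0 : 0 ≤ θ := by
    apply div_nonneg _ hc.le
    have : (2:ℝ) ≤ (k:ℝ) := by exact_mod_cast hk
    linarith
  have hθ1 : θ ≤ 1 := by rw [div_le_one hc]; linarith
  have hexp : -((k:ℝ)-2)/((k:ℝ)-1) = -θ := neg_div _ _
  set Sx := ∑ l, contr P x l with hSxdef
  set Sy := ∑ l, contr P y l with hSydef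
  have hSx0 : 0 ≤ Sx := Finset.sum_nonneg fun l _ => contr_nonneg P hP0 x hx0 l
  have hSy0 : 0 ≤ Sy := Finset.sum_nonneg fun l _ => contr_nonneg P hP0 y hy0 l
  have hSyM : Sy ≤ (1-α)⁻¹ := by
    calc Sy ≤ (∑ i, y i) ^ (k-1) := contr_sum_le P hP0 hPs y hy0
    _ ≤ M ^ (k-1) := pow_le_pow_left₀ (Finset.sum_nonneg fun i _ => hy0 i) hyΔ _
    _ = (1-α)⁻¹ := hMk1
  set a := 1 + α * Sx with hadef
  set b := 1 + α * Sy with hbdef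
  have ha1 : 1 ≤ a := by nlinarith
  have hab : a ≤ b := by nlinarith
  have hb1 : 1 ≤ b := le_trans ha1 hab
  have ha0 : (0:ℝ) < a := by linarith
  have hb0 : (0:ℝ) < b := by linarith
  set D := ∑ i, |contr P x i - contr P y i| with hDdef
  have hD0 : 0 ≤ D := Finset.sum_nonneg fun i _ => abs_nonneg _
  have hd0 : (0:ℝ) ≤ ∑ i, |x i - y i| := Finset.sum_nonneg fun i _ => abs_nonneg _
  have hanb : b ^ (-θ) ≤ a ^ (-θ) :=
    Real.rpow_le_rpow_of_nonpos ha0 hab (neg_nonpos.mpr hθ0)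
  have hpt : ∀ i, |Phi k P v α x i - Phi k P v α y i| ≤
      (a ^ (-θ) - b ^ (-θ)) * (v i + α * contr P x i) +
        b ^ (-θ) * (α * |contr P x i - contr P y i|) := by
    intro i
    have hdiff : Phi k P v α x i - Phi k P v α y i =
        (a ^ (-θ) - b ^ (-θ)) * (v i + α * contr P x i) +
          b ^ (-θ) * (α * (contr P x i - contr P y i)) := by
      simp only [Phi, hexp, ← hSxdef, ← hSydef, ← hadef, ← hbdef]
      ring
    rw [hdiff]
    refine (abs_add_le _ _).trans (add_le_add ?_ ?_)
    · rw [abs_mul]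
      apply le_of_eq
      congr 1
      · exact abs_of_nonneg (by linarith [hanb])
      · exact abs_of_nonneg (add_nonneg (hv0 i) (mul_nonneg hα0 (contr_nonneg P hP0 x hx0 i)))
    · rw [abs_mul, abs_mul]
      apply le_of_eq
      rw [abs_of_nonneg (Real.rpow_nonneg hb0.le _), abs_of_nonneg hα0]
  have hsum1 : ∑ i, (v i + α * contr P x i) = a := by
    rw [Finset.sum_add_distrib, hv1, ← Finset.mul_sum, hadef, hSxdef]
  have hsplit : ∑ i, ((a ^ (-θ) - b ^ (-θ)) * (v i + α * contr P x i) +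
      b ^ (-θ) * (α * |contr P x i - contr P y i|)) =
      (a ^ (-θ) - b ^ (-θ)) * a + b ^ (-θ) * (α * D) := by
    rw [Finset.sum_add_distrib, ← Finset.mul_sum, hsum1, ← Finset.mul_sum, ← Finset.mul_sum,
      hDdef]
  have hS1 : (a ^ (-θ) - b ^ (-θ)) * a ≤ θ * (α * D) := by
    have hbn := bern_aux hθ0 hθ1 ha1 hab
    have hba : b - a = α * (Sy - Sx) := by rw [hadef, hbdef]; ring
    have hSD : Sy - Sx ≤ D := by
      have h1 : Sy - Sx = ∑ i, (contr P y i - contr P x i) := by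
        rw [hSxdef, hSydef, Finset.sum_sub_distrib]
      rw [h1, hDdef]
      apply Finset.sum_le_sum; intro i _
      rw [abs_sub_comm]; exact le_abs_self _
    calc (a ^ (-θ) - b ^ (-θ)) * a = a * (a ^ (-θ) - b ^ (-θ)) := by ring
    _ ≤ θ * (b - a) := hbn
    _ = θ * α * (Sy - Sx) := by rw [hba]; ring
    _ ≤ θ * α * D := mul_le_mul_of_nonneg_left hSD (mul_nonneg hθ0 hα0)
    _ = θ * (α * D) := by ring
  have hS2 : b ^ (-θ) * (α * D) ≤ α * D := by
    have h1 : b ^ (-θ) ≤ 1 := Real.rpow_le_one_of_one_le_of_nonpos hb1 (neg_nonpos.mpr hθ0)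
    nlinarith [mul_nonneg hα0 hD0, Real.rpow_nonneg hb0.le (-θ)]
  have hcast1 : ((k-1:ℕ):ℝ) = (k:ℝ)-1 := by push_cast [Nat.cast_sub (by omega : 1 ≤ k)]; ring
  have hDlip : D ≤ ((k:ℝ)-1) * M ^ (k-2) * ∑ i, |x i - y i| := by
    have h := contr_lip P hP0 hPs x y hx0 hy0 M hM1 hxΔ hyΔ
    rw [hcast1] at h
    have h2 : (k-1) - 1 = k-2 := by omega
    rw [h2] at h
    exact h
  have hfin : (1+θ)*((k:ℝ)-1) = 2*(k:ℝ)-3 := by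
    rw [hθdef]; field_simp; ring
  calc ∑ i, |Phi k P v α x i - Phi k P v α y i|
      ≤ ∑ i, ((a ^ (-θ) - b ^ (-θ)) * (v i + α * contr P x i) +
          b ^ (-θ) * (α * |contr P x i - contr P y i|)) :=
        Finset.sum_le_sum fun i _ => hpt i
  _ = (a ^ (-θ) - b ^ (-θ)) * a + b ^ (-θ) * (α * D) := hsplit
  _ ≤ θ * (α * D) + α * D := add_le_add hS1 hS2
  _ = (1+θ) * α * D := by ring
  _ ≤ (1+θ) * α * (((k:ℝ)-1) * M ^ (k-2) * ∑ i, |x i - y i|) := by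
      apply mul_le_mul_of_nonneg_left hDlip
      have : 0 ≤ 1 + θ := by linarith
      exact mul_nonneg this hα0
  _ = (2*(k:ℝ)-3) * α * M ^ (k-2) * ∑ i, |x i - y i| := by
      rw [← hfin]; ring
  _ = (2*(k:ℝ)-3) * α * (1 - α) ^ (-((k:ℝ)-2)/((k:ℝ)-1)) * ∑ i, |x i - y i| := by
      rw [hMk2]

lemma phi_contract {n : ℕ} (k : ℕ) (hk : 2 ≤ k)
    (P : Fin n → (Fin (k-1) → Fin n) → ℝ)
    (hP0 : ∀ i j, 0 ≤ P i j) (hPs : ∀ j, ∑ i, P i j ≤ 1)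
    (v : Fin n → ℝ) (hv0 : ∀ i, 0 ≤ v i) (hv1 : ∑ i, v i = 1)
    (α : ℝ) (hα0 : 0 ≤ α) (hα1 : α < 1)
    (x y : Fin n → ℝ)
    (hx0 : ∀ i, 0 ≤ x i) (hxΔ : ∑ i, x i ≤ (1 - α) ^ (-(1:ℝ)/((k:ℝ)-1)))
    (hy0 : ∀ i, 0 ≤ y i) (hyΔ : ∑ i, y i ≤ (1 - α) ^ (-(1:ℝ)/((k:ℝ)-1))) :
    ∑ i, |Phi k P v α x i - Phi k P v α y i| ≤
      (2*(k:ℝ)-3) * α * (1 - α) ^ (-((k:ℝ)-2)/((k:ℝ)-1)) * ∑ i, |x i - y i| := by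
  rcases le_total (∑ l, contr P x l) (∑ l, contr P y l) with h | h
  · exact phi_contract_core k hk P hP0 hPs v hv0 hv1 α hα0 hα1 x y hx0 hxΔ hy0 hyΔ h
  · have h2 := phi_contract_core k hk P hP0 hPs v hv0 hv1 α hα0 hα1 y x hy0 hyΔ hx0 hxΔ h
    calc ∑ i, |Phi k P v α x i - Phi k P v α y i|
        = ∑ i, |Phi k P v α y i - Phi k P v α x i| := by
          apply Finset.sum_congr rfl; intro i _; rw [abs_sub_comm]
    _ ≤ (2*(k:ℝ)-3) * α * (1 - α) ^ (-((k:ℝ)-2)/((k:ℝ)-1)) * ∑ i, |y i - x i| := h2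
    _ = (2*(k:ℝ)-3) * α * (1 - α) ^ (-((k:ℝ)-2)/((k:ℝ)-1)) * ∑ i, |x i - y i| := by
          congr 1; apply Finset.sum_congr rfl; intro i _; rw [abs_sub_comm]

lemma phi_mem {n : ℕ} (k : ℕ) (hk : 2 ≤ k)
    (P : Fin n → (Fin (k-1) → Fin n) → ℝ)
    (hP0 : ∀ i j, 0 ≤ P i j) (hPs : ∀ j, ∑ i, P i j ≤ 1)
    (v : Fin n → ℝ) (hv0 : ∀ i, 0 ≤ v i) (hv1 : ∑ i, v i = 1)
    (α : ℝ) (hα0 : 0 ≤ α) (hα1 : α < 1)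
    (z : Fin n → ℝ) (hz0 : ∀ i, 0 ≤ z i)
    (hzΔ : ∑ i, z i ≤ (1 - α) ^ (-(1:ℝ)/((k:ℝ)-1))) :
    (∀ i, 0 ≤ Phi k P v α z i) ∧
      ∑ i, Phi k P v α z i ≤ (1 - α) ^ (-(1:ℝ)/((k:ℝ)-1)) := by
  have hc := hc_pos hk
  have h1α : (0:ℝ) < 1 - α := by linarith
  set M : ℝ := (1 - α) ^ (-(1:ℝ)/((k:ℝ)-1)) with hMdef
  have hM1 : 1 ≤ M := M_one_le hk hα0 hα1
  set S := ∑ l, contr P z l with hSdef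
  have hS0 : 0 ≤ S := Finset.sum_nonneg fun l _ => contr_nonneg P hP0 z hz0 l
  have hSM : S ≤ (1-α)⁻¹ := by
    calc S ≤ (∑ i, z i) ^ (k-1) := contr_sum_le P hP0 hPs z hz0
    _ ≤ M ^ (k-1) := pow_le_pow_left₀ (Finset.sum_nonneg fun i _ => hz0 i) hzΔ _
    _ = (1-α)⁻¹ := M_pow_k1 hk hα0 hα1
  set a := 1 + α * S with hadef
  have ha1 : 1 ≤ a := by nlinarith
  have ha0 : (0:ℝ) < a := by linarith
  have haM : a ≤ (1-α)⁻¹ := by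
    have h1 : 1 + α * (1-α)⁻¹ = (1-α)⁻¹ := by field_simp; ring
    nlinarith
  constructor
  · intro i
    apply mul_nonneg (Real.rpow_nonneg ha0.le _)
    exact add_nonneg (hv0 i) (mul_nonneg hα0 (contr_nonneg P hP0 z hz0 i))
  · have hsum : ∑ i, Phi k P v α z i = a ^ (-((k:ℝ)-2)/((k:ℝ)-1)) * a := by
      simp only [Phi, ← hSdef, ← hadef, ← Finset.mul_sum]
      congr 1
      rw [Finset.sum_add_distrib, hv1, ← Finset.mul_sum, ← hSdef]
    rw [hsum]
    have hpow : a ^ (-((k:ℝ)-2)/((k:ℝ)-1)) * a = a ^ ((1:ℝ)/((k:ℝ)-1)) := by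
      nth_rewrite 2 [← Real.rpow_one a]
      rw [← Real.rpow_add ha0]
      congr 1
      field_simp
      norm_num
    rw [hpow]
    calc a ^ ((1:ℝ)/((k:ℝ)-1)) ≤ ((1-α)⁻¹) ^ ((1:ℝ)/((k:ℝ)-1)) :=
          Real.rpow_le_rpow ha0.le haM (by positivity)
    _ = M := by
        rw [← Real.rpow_neg_one (1-α), ← Real.rpow_mul h1α.le]
        congr 1
        field_simp

lemma phi_fixed {n : ℕ} (k : ℕ) (hk : 2 ≤ k)
    (P : Fin n → (Fin (k-1) → Fin n) → ℝ)
    (hP0 : ∀ i j, 0 ≤ P i j)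
    (v : Fin n → ℝ) (hv1 : ∑ i, v i = 1)
    (α : ℝ) (hα0 : 0 ≤ α)
    (ystar : Fin n → ℝ) (hys0 : ∀ i, 0 ≤ ystar i)
    (hyseq : ∀ i, (∑ l, ystar l) ^ (k-2) * ystar i - α * contr P ystar i = v i) :
    Phi k P v α ystar = ystar := by
  have hc := hc_pos hk
  set T := ∑ l, ystar l with hTdef
  set S := ∑ l, contr P ystar l with hSdef
  have hS0 : 0 ≤ S := Finset.sum_nonneg fun l _ => contr_nonneg P hP0 ystar hys0 l
  have hT0 : 0 ≤ T := Finset.sum_nonneg fun l _ => hys0 l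
  have hTk : T ^ (k-1) = 1 + α * S := by
    have h1 : ∑ i, (T ^ (k-2) * ystar i - α * contr P ystar i) = ∑ i, v i :=
      Finset.sum_congr rfl fun i _ => hyseq i
    rw [hv1, Finset.sum_sub_distrib, ← Finset.mul_sum, ← Finset.mul_sum, ← hTdef, ← hSdef] at h1
    have h2 : T ^ (k-2) * T = T ^ (k-1) := by
      rw [← pow_succ]
      congr 1
      omega
    rw [h2] at h1
    linarith
  have hT1 : 1 ≤ T ^ (k-1) := by rw [hTk]; nlinarith
  have hTpos : 0 < T := by
    rcases eq_or_lt_of_le hT0 with h | h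
    · exfalso
      rw [← h] at hT1
      rw [zero_pow (by omega : k - 1 ≠ 0)] at hT1
      linarith
    · exact h
  have hTk2pos : (0:ℝ) < T ^ (k-2) := pow_pos hTpos _
  funext i
  show (1 + α * ∑ l, contr P ystar l) ^ (-((k:ℝ)-2)/((k:ℝ)-1)) *
      (v i + α * contr P ystar i) = ystar i
  have hvi : v i + α * contr P ystar i = T ^ (k-2) * ystar i := by
    have := hyseq i
    linarith
  rw [hvi, ← hSdef, ← hTk]
  have hpow : ((T ^ (k-1) : ℝ)) ^ (-((k:ℝ)-2)/((k:ℝ)-1)) = (T ^ (k-2))⁻¹ := by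
    rw [← Real.rpow_natCast T (k-1), ← Real.rpow_mul hT0]
    have hcast : ((k-1 : ℕ) : ℝ) = (k:ℝ) - 1 := by
      push_cast [Nat.cast_sub (by omega : 1 ≤ k)]; ring
    have hcast2 : ((k-2 : ℕ) : ℝ) = (k:ℝ) - 2 := by
      push_cast [Nat.cast_sub hk]; ring
    rw [hcast]
    have hexp : ((k:ℝ)-1) * (-((k:ℝ)-2)/((k:ℝ)-1)) = -((k:ℝ)-2) := by field_simp
    rw [hexp, ← hcast2, Real.rpow_neg hT0, Real.rpow_natCast]
  rw [hpow, ← mul_assoc, inv_mul_cancel₀ (ne_of_gt hTk2pos), one_mul]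

theorem splitting_linear_convergence (n k : ℕ) (hn : 0 < n) (hk : 2 ≤ k)
    (P : Fin n → (Fin (k-1) → Fin n) → ℝ)
    (hP0 : ∀ i j, 0 ≤ P i j) (hPs : ∀ j, ∑ i, P i j ≤ 1)
    (v : Fin n → ℝ) (hv0 : ∀ i, 0 ≤ v i) (hv1 : ∑ i, v i = 1)
    (α : ℝ) (hα0 : 0 ≤ α) (hα1 : α < 1)
    (hς : (2*(k:ℝ)-3) * α * (1 - α) ^ (-((k:ℝ)-2)/((k:ℝ)-1)) < 1)
    (ystar : Fin n → ℝ) (hys0 : ∀ i, 0 ≤ ystar i)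
    (hysΔ : ∑ i, ystar i ≤ (1 - α) ^ (-(1:ℝ)/((k:ℝ)-1)))
    (hyseq : ∀ i, (∑ l, ystar l) ^ (k-2) * ystar i - α * contr P ystar i = v i)
    (y0 : Fin n → ℝ) (hy00 : ∀ i, 0 ≤ y0 i)
    (hy0Δ : ∑ i, y0 i ≤ (1 - α) ^ (-(1:ℝ)/((k:ℝ)-1)))
    (y : ℕ → Fin n → ℝ) (hseq0 : y 0 = y0)
    (hseq : ∀ c, y (c+1) = Phi k P v α (y c)) :
    (∀ c, ∑ i, |y c i - ystar i| ≤
        ((2*(k:ℝ)-3) * α * (1 - α) ^ (-((k:ℝ)-2)/((k:ℝ)-1))) ^ c * ∑ i, |y0 i - ystar i|) ∧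
    Filter.Tendsto y Filter.atTop (nhds ystar) := by
  set ς : ℝ := (2*(k:ℝ)-3) * α * (1 - α) ^ (-((k:ℝ)-2)/((k:ℝ)-1)) with hςdef
  have hk2 : (2:ℝ) ≤ (k:ℝ) := by exact_mod_cast hk
  have hς0 : 0 ≤ ς := by
    apply mul_nonneg (mul_nonneg (by linarith) hα0) (Real.rpow_nonneg (by linarith) _)
  have hfix : Phi k P v α ystar = ystar := phi_fixed k hk P hP0 v hv1 α hα0 ystar hys0 hyseq
  have hmem : ∀ c, (∀ i, 0 ≤ y c i) ∧ ∑ i, y c i ≤ (1 - α) ^ (-(1:ℝ)/((k:ℝ)-1)) := by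
    intro c
    induction c with
    | zero => rw [hseq0]; exact ⟨hy00, hy0Δ⟩
    | succ c ih =>
      rw [hseq]
      exact phi_mem k hk P hP0 hPs v hv0 hv1 α hα0 hα1 (y c) ih.1 ih.2
  have hbound : ∀ c, ∑ i, |y c i - ystar i| ≤ ς ^ c * ∑ i, |y0 i - ystar i| := by
    intro c
    induction c with
    | zero => rw [hseq0]; simp
    | succ c ih =>
      rw [hseq]
      calc ∑ i, |Phi k P v α (y c) i - ystar i|
          = ∑ i, |Phi k P v α (y c) i - Phi k P v α ystar i| := by rw [hfix]
      _ ≤ ς * ∑ i, |y c i - ystar i| :=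
          phi_contract k hk P hP0 hPs v hv0 hv1 α hα0 hα1 (y c) ystar
            (hmem c).1 (hmem c).2 hys0 hysΔ
      _ ≤ ς * (ς ^ c * ∑ i, |y0 i - ystar i|) := mul_le_mul_of_nonneg_left ih hς0
      _ = ς ^ (c+1) * ∑ i, |y0 i - ystar i| := by ring
  refine ⟨hbound, ?_⟩
  rw [tendsto_pi_nhds]
  intro i
  have h1 : Filter.Tendsto (fun c => ς ^ c * ∑ i, |y0 i - ystar i|) Filter.atTop (nhds 0) := by
    have h2 := tendsto_pow_atTop_nhds_zero_of_lt_one hς0 hς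
    simpa using h2.mul_const (∑ i, |y0 i - ystar i|)
  have h2 : ∀ c, ‖y c i - ystar i‖ ≤ ς ^ c * ∑ i, |y0 i - ystar i| := by
    intro c
    rw [Real.norm_eq_abs]
    refine le_trans ?_ (hbound c)
    exact Finset.single_le_sum (fun j _ => abs_nonneg (y c j - ystar j)) (Finset.mem_univ i)
  have h3 : Filter.Tendsto (fun c => y c i - ystar i) Filter.atTop (nhds 0) :=
    squeeze_zero_norm h2 h1
  have h4 := h3.add_const (ystar i)
  simpa using h4
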